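/- For the scalar ODE ẏ = α(1/y) with α a class K function on (0,∞) extended so that ᾱ(z) = α(z)z² is class K on [0,∞), every initial condition y(t₀) = y₀ ∈ (0,∞) admits a unique solution defined for all t ≥ t₀, which moreover stays strictly positive: y(t) > 0 for all t ≥ t₀. -/

import Mathlib

open Set intervalIntegral MeasureTheory

/-- Lemma 2: ẏ = α(1/y) with α class K on (0,∞) and ᾱ(z)=α(z)z² class K on [0,∞)
has a unique, globally defined, strictly positive solution from each y₀ > 0. -/
theorem stmt10 (α : ℝ → ℝ)
    (hcα : ContinuousOn α (Set.Ioi 0)) (hmα : StrictMonoOn α (Set.Ioi 0))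
    (hposα : ∀ z ∈ Set.Ioi (0:ℝ), 0 < α z)
    (hcb : ContinuousOn (fun z => α z * z ^ 2) (Set.Ici 0))
    (hmb : StrictMonoOn (fun z => α z * z ^ 2) (Set.Ici 0))
    (h0b : α 0 * 0 ^ 2 = 0)
    (t₀ y₀ : ℝ) (hy₀ : 0 < y₀) :
    ∃ y : ℝ → ℝ,
      (y t₀ = y₀ ∧ ∀ t ∈ Set.Ici t₀, 0 < y t ∧
        HasDerivWithinAt y (α (1 / y t)) (Set.Ici t₀) t) ∧
      ∀ y' : ℝ → ℝ, (y' t₀ = y₀ ∧ ∀ t ∈ Set.Ici t₀, 0 < y' t ∧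
        HasDerivWithinAt y' (α (1 / y' t)) (Set.Ici t₀) t) →
        ∀ t ∈ Set.Ici t₀, y' t = y t := by
  -- the reciprocal of the speed
  set g : ℝ → ℝ := fun s => (α (1 / s))⁻¹ with hg_def
  have hαpos : ∀ s : ℝ, 0 < s → 0 < α (1 / s) := fun s hs =>
    hposα _ (mem_Ioi.mpr (by positivity))
  have hgpos : ∀ s : ℝ, 0 < s → 0 < g s := fun s hs => inv_pos.mpr (hαpos s hs)
  have hgc : ContinuousOn g (Ioi 0) := by
    apply ContinuousOn.inv₀
    · refine hcα.comp (continuousOn_const.div continuousOn_id ?_) ?_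
      · exact fun s hs => ne_of_gt hs
      · exact fun s hs => mem_Ioi.mpr (div_pos one_pos hs)
    · exact fun s hs => ne_of_gt (hαpos s hs)
  have hgmono : ∀ a b : ℝ, 0 < a → a ≤ b → g a ≤ g b := by
    intro a b ha hab
    rcases eq_or_lt_of_le hab with rfl | h
    · exact le_refl _
    · have hb : 0 < b := lt_trans ha h
      have h1 : (1:ℝ)/b < 1/a := by
        apply div_lt_div_of_pos_left one_pos ha h
      have := hmα (mem_Ioi.mpr (by positivity)) (mem_Ioi.mpr (by positivity)) h1
      exact inv_anti₀ (hαpos b hb) (le_of_lt this)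
  have hint : ∀ a b : ℝ, 0 < a → 0 < b → IntervalIntegrable g volume a b := by
    intro a b ha hb
    refine (hgc.mono ?_).intervalIntegrable
    intro x hx
    exact mem_Ioi.mpr (lt_of_lt_of_le (lt_min ha hb) hx.1)
  set F : ℝ → ℝ := fun u => ∫ s in y₀..u, g s with hF_def
  have hFd : ∀ u : ℝ, 0 < u → HasDerivAt F (g u) u := by
    intro u hu
    exact integral_hasDerivAt_right (hint y₀ u hy₀ hu)
      (hgc.stronglyMeasurableAtFilter isOpen_Ioi u hu)
      (hgc.continuousAt (isOpen_Ioi.mem_nhds hu))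
  have hFy₀ : F y₀ = 0 := integral_same
  have hFgap : ∀ a b : ℝ, 0 < a → 0 < b → F b - F a = ∫ s in a..b, g s := by
    intro a b ha hb
    exact integral_interval_sub_left (hint y₀ b hy₀ hb) (hint y₀ a hy₀ ha)
  have hFmono : StrictMonoOn F (Ioi 0) := by
    intro a ha b hb hab
    have hpos : 0 < ∫ s in a..b, g s :=
      intervalIntegral_pos_of_pos_on (hint a b ha hb)
        (fun x hx => hgpos x (lt_trans ha hx.1)) hab
    have := hFgap a b ha hb
    linarith
  have hinj : InjOn F (Ioi 0) := hFmono.injOn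
  have hFlb : ∀ u : ℝ, y₀ ≤ u → (u - y₀) * g y₀ ≤ F u := by
    intro u hu
    have hu0 : 0 < u := lt_of_lt_of_le hy₀ hu
    have h1 : (∫ _s in y₀..u, g y₀) ≤ ∫ s in y₀..u, g s := by
      apply integral_mono_on hu intervalIntegrable_const (hint y₀ u hy₀ hu0)
      exact fun x hx => hgmono y₀ x hy₀ hx.1
    simpa [smul_eq_mul] using h1
  set u₁ : ℝ := y₀ / 2 with hu₁_def
  have hu₁pos : 0 < u₁ := by positivity
  set c₁ : ℝ := F u₁ with hc₁_def
  have hc₁neg : c₁ < 0 := by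
    have := hFmono (mem_Ioi.mpr hu₁pos) (mem_Ioi.mpr hy₀) (by linarith)
    simpa [hFy₀] using this
  -- surjectivity
  have hsurj : ∀ r : ℝ, ∃ u, u₁ ≤ u ∧ F u = max r c₁ := by
    intro r
    set m := max r c₁ with hm_def
    have hgy₀ : 0 < g y₀ := hgpos y₀ hy₀
    set M : ℝ := y₀ + max ((m + 1) / g y₀) 0 with hM_def
    have hMy₀ : y₀ ≤ M := by
      rw [hM_def]
      have := le_max_right ((m + 1) / g y₀) (0:ℝ); linarith
    have hFM : m ≤ F M := by
      have h1 := hFlb M hMy₀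
      have h2 : (m + 1) / g y₀ ≤ M - y₀ := by
        rw [hM_def]
        have := le_max_left ((m + 1) / g y₀) (0:ℝ); linarith
      have h3 : m + 1 ≤ (M - y₀) * g y₀ := by
        rw [div_le_iff₀ hgy₀] at h2; linarith
      linarith
    have hu₁M : u₁ ≤ M := by linarith
    have hcont : ContinuousOn F (Icc u₁ M) := by
      intro x hx
      exact ((hFd x (lt_of_lt_of_le hu₁pos hx.1)).continuousAt).continuousWithinAt
    have := intermediate_value_Icc hu₁M hcont
    have hmem : m ∈ Icc (F u₁) (F M) := ⟨le_max_right r c₁, hFM⟩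
    obtain ⟨u, hu, hFu⟩ := this hmem
    exact ⟨u, hu.1, hFu⟩
  choose inv' hinv₁ hinv₂ using hsurj
  have hinvpos : ∀ r, 0 < inv' r := fun r => lt_of_lt_of_le hu₁pos (hinv₁ r)
  have hFinv : ∀ r : ℝ, c₁ ≤ r → F (inv' r) = r := by
    intro r hr; rw [hinv₂ r]; exact max_eq_left hr
  -- continuity of the inverse
  have hinvmono : MonotoneOn inv' (Ioi c₁) := by
    intro r hr r' hr' hrr'
    refine le_of_not_gt fun hlt => ?_
    have h2 := hFmono (mem_Ioi.mpr (hinvpos r')) (mem_Ioi.mpr (hinvpos r)) hlt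
    rw [hFinv r (le_of_lt hr), hFinv r' (le_of_lt hr')] at h2
    exact absurd h2 (not_lt.mpr hrr')
  have himg : Ioi u₁ ⊆ inv' '' Ioi c₁ := by
    intro u hu
    have hu0 : 0 < u := lt_trans hu₁pos hu
    have hFu : c₁ < F u := hFmono (mem_Ioi.mpr hu₁pos) (mem_Ioi.mpr hu0) hu
    refine ⟨F u, mem_Ioi.mpr hFu, ?_⟩
    exact hinj (mem_Ioi.mpr (hinvpos _)) (mem_Ioi.mpr hu0) (hFinv _ (le_of_lt hFu))
  have hinvcont : ∀ a : ℝ, 0 ≤ a → ContinuousAt inv' a := by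
    intro a ha
    have hac₁ : c₁ < a := lt_of_lt_of_le hc₁neg ha
    have hlt : u₁ < inv' a := by
      refine lt_of_not_ge fun h => ?_
      have h2 : F (inv' a) ≤ F u₁ :=
        hFmono.monotoneOn (mem_Ioi.mpr (hinvpos a)) (mem_Ioi.mpr hu₁pos) h
      rw [hFinv a (le_of_lt hac₁)] at h2
      linarith
    refine continuousAt_of_monotoneOn_of_image_mem_nhds (s := Ioi c₁) hinvmono
      (isOpen_Ioi.mem_nhds hac₁) ?_
    exact Filter.mem_of_superset (isOpen_Ioi.mem_nhds hlt) himg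
  have hinvder : ∀ a : ℝ, 0 ≤ a → HasDerivAt inv' (g (inv' a))⁻¹ a := by
    intro a ha
    refine HasDerivAt.of_local_left_inverse (hinvcont a ha)
      (hFd (inv' a) (hinvpos a)) (ne_of_gt (hgpos _ (hinvpos a))) ?_
    filter_upwards [isOpen_Ioi.mem_nhds (lt_of_lt_of_le hc₁neg ha)] with r hr
    exact hFinv r (le_of_lt hr)
  -- the solution
  refine ⟨fun t => inv' (t - t₀), ⟨?_, ?_⟩, ?_⟩
  · have h0 : F (inv' (t₀ - t₀)) = F y₀ := by
      rw [hFy₀]; simpa using hFinv 0 (le_of_lt hc₁neg)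
    exact hinj (mem_Ioi.mpr (hinvpos _)) (mem_Ioi.mpr hy₀) h0
  · intro t ht
    refine ⟨hinvpos _, ?_⟩
    have ht' : (0:ℝ) ≤ t - t₀ := by simpa using sub_nonneg.mpr (show t₀ ≤ t from ht)
    have h1 : HasDerivAt (fun t => inv' (t - t₀)) ((g (inv' (t - t₀)))⁻¹ * 1) t :=
      (hinvder (t - t₀) ht').comp t ((hasDerivAt_id t).sub_const t₀)
    have h2 : (g (inv' (t - t₀)))⁻¹ * 1 = α (1 / inv' (t - t₀)) := by
      rw [hg_def]; simp
    rw [h2] at h1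
    exact h1.hasDerivWithinAt
  · rintro y' ⟨hy'0, hy'⟩ t ht
    have ht' : t₀ ≤ t := ht
    -- F ∘ y' - (· - t₀) is constant on [t₀, t]
    set H : ℝ → ℝ := fun s => F (y' s) - (s - t₀) with hH_def
    have hcont : ContinuousOn H (Icc t₀ t) := by
      intro s hs
      have hds := (hy' s hs.1)
      have hcy' : ContinuousWithinAt y' (Icc t₀ t) s :=
        (hds.2.continuousWithinAt).mono Icc_subset_Ici_self
      exact (((hFd (y' s) hds.1).continuousAt.comp_continuousWithinAt hcy').sub
        ((continuousWithinAt_id).sub continuousWithinAt_const))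
    have hderiv : ∀ s ∈ Ico t₀ t, HasDerivWithinAt H 0 (Ici s) s := by
      intro s hs
      obtain ⟨hpos, hds⟩ := hy' s hs.1
      have h1 : HasDerivWithinAt (fun s => F (y' s)) (g (y' s) * α (1 / y' s)) (Ici s) s :=
        (hFd (y' s) hpos).comp_hasDerivWithinAt s (hds.mono (Ici_subset_Ici.mpr hs.1))
      have h2 : g (y' s) * α (1 / y' s) = 1 := by
        rw [hg_def]; exact inv_mul_cancel₀ (ne_of_gt (hαpos _ hpos))
      rw [h2] at h1
      have h3 := h1.sub ((hasDerivWithinAt_id s (Ici s)).sub_const t₀)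
      simp only [sub_self] at h3; exact h3
    have hHt := constant_of_has_deriv_right_zero hcont hderiv t ⟨ht', le_refl t⟩
    have hHt₀ : H t₀ = 0 := by simp [hH_def, hy'0, hFy₀]
    have hFy't : F (y' t) = t - t₀ := by
      rw [hHt₀] at hHt; simp only [hH_def] at hHt; linarith
    have ht0 : (0:ℝ) ≤ t - t₀ := sub_nonneg.mpr ht'
    have hFyt : F (inv' (t - t₀)) = t - t₀ := hFinv _ (le_trans (le_of_lt hc₁neg) ht0)
    exact hinj (mem_Ioi.mpr (hy' t ht).1) (mem_Ioi.mpr (hinvpos _)) (hFy't.trans hFyt.symm)
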